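/- arXiv:1003.4770 — 9 statements merged into one kernel-verified Lean document; each statement's English description precedes it below -/
import Mathlib

section
/- The commutator algebra of a Hom-associative algebra is a Hom-Lie algebra: if (V, μ, α) satisfies μ(μ(x,y), α(z)) = μ(α(x), μ(y,z)) for all x,y,z, then the bracket [x,y] := μ(x,y) − μ(y,x) is skew-symmetric and satisfies the Hom-Jacobi identity [[x,y],α(z)] + [[y,z],α(x)] + [[z,x],α(y)] = 0. -/
/-- The commutator algebra of a Hom-associative algebra is a Hom-Lie algebra. -/
theorem stmt_0 {K V : Type*} [Field K] [CharZero K] [AddCommGroup V] [Module K V]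
    (μ : V →ₗ[K] V →ₗ[K] V) (α : V →ₗ[K] V)
    (hassoc : ∀ x y z : V, μ (μ x y) (α z) = μ (α x) (μ y z)) :
    (∀ x y : V, μ x y - μ y x = -(μ y x - μ x y)) ∧
    (∀ x y z : V,
      let br : V → V → V := fun a b => μ a b - μ b a
      br (br x y) (α z) + br (br y z) (α x) + br (br z x) (α y) = 0) := by
  refine ⟨fun x y => by abel, fun x y z => ?_⟩
  intro br
  show μ (μ x y - μ y x) (α z) - μ (α z) (μ x y - μ y x)
      + (μ (μ y z - μ z y) (α x) - μ (α x) (μ y z - μ z y))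
      + (μ (μ z x - μ x z) (α y) - μ (α y) (μ z x - μ x z)) = 0
  simp only [map_sub, LinearMap.sub_apply]
  rw [hassoc x y z, hassoc y x z, hassoc y z x, hassoc z y x, hassoc z x y, hassoc x z y]
  abel
end

section
/- The commutator-Hom-associator algebra of a non-Hom-associative algebra is a Hom-Akivis algebra: given (A, μ, α) with μ bilinear and α linear, the operations [x,y] := μ(x,y) − μ(y,x) and [x,y,z] := μ(μ(x,y), α(z)) − μ(α(x), μ(y,z)) satisfy the Hom-Akivis identity: the cyclic sum over x,y,z of [[x,y], α(z)] equals the cyclic sum of [x,y,z] minus the cyclic sum of [y,x,z]. -/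
/-- The commutator-Hom-associator algebra of a non-Hom-associative algebra
satisfies the Hom-Akivis identity. -/
theorem stmt_4 {K A : Type*} [Field K] [CharZero K] [AddCommGroup A] [Module K A]
    (μ : A →ₗ[K] A →ₗ[K] A) (α : A →ₗ[K] A) :
    ∀ x y z : A,
      let br : A → A → A := fun a b => μ a b - μ b a
      let as : A → A → A → A := fun a b c => μ (μ a b) (α c) - μ (α a) (μ b c)
      br (br x y) (α z) + br (br y z) (α x) + br (br z x) (α y)
        = (as x y z + as y z x + as z x y) - (as y x z + as z y x + as x z y) := by
  intro x y z br as
  simp only [br, as, map_sub, LinearMap.sub_apply]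
  abel
end

section
/- Let (A, [−,−], [−,−,−], α) be a Hom-Akivis algebra and β : A → A a self-morphism of it commuting with nothing assumed. Define [x,y]_β := β([x,y]) and [x,y,z]_β := β²([x,y,z]). Then (A, [−,−]_β, [−,−,−]_β, β∘α) is a Hom-Akivis algebra. -/
/-- Twisting a Hom-Akivis algebra along a self-morphism β yields a
Hom-Akivis algebra with twist β ∘ α. -/
theorem stmt_6 {K A : Type*} [Field K] [CharZero K] [AddCommGroup A] [Module K A]
    (br : A →ₗ[K] A →ₗ[K] A) (tr : A →ₗ[K] A →ₗ[K] A →ₗ[K] A)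
    (α : A →ₗ[K] A) (β : A →ₗ[K] A)
    (hskew : ∀ x y : A, br x y = -br y x)
    (hakivis : ∀ x y z : A,
      br (br x y) (α z) + br (br y z) (α x) + br (br z x) (α y)
        = (tr x y z + tr y z x + tr z x y) - (tr y x z + tr z y x + tr x z y))
    (hβbr : ∀ x y : A, β (br x y) = br (β x) (β y))
    (hβtr : ∀ x y z : A, β (tr x y z) = tr (β x) (β y) (β z)) :
    (∀ x y : A, β (br x y) = -β (br y x)) ∧
    (∀ x y z : A,
      let brβ : A → A → A := fun a b => β (br a b)
      let trβ : A → A → A → A := fun a b c => β (β (tr a b c))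
      brβ (brβ x y) (β (α z)) + brβ (brβ y z) (β (α x)) + brβ (brβ z x) (β (α y))
        = (trβ x y z + trβ y z x + trβ z x y)
          - (trβ y x z + trβ z y x + trβ x z y)) := by
  refine ⟨fun x y => by rw [hskew x y]; simp, fun x y z => ?_⟩
  intro brβ trβ
  show β (br (β (br x y)) (β (α z))) + β (br (β (br y z)) (β (α x)))
      + β (br (β (br z x)) (β (α y))) = _
  rw [← hβbr, ← hβbr, ← hβbr]
  have := congrArg β (congrArg β (hakivis x y z))
  simpa [map_add, map_sub] using this
end

section
/- Let (A, [−,−], [−,−,−], α) be a multiplicative Hom-Akivis algebra and β a self-morphism of (A, [−,−], [−,−,−], α) commuting with α. Then the twisted Hom-Akivis algebra (A, [−,−]_β, [−,−,−]_β, β∘α), where [x,y]_β := β([x,y]) and [x,y,z]_β := β²([x,y,z]), is multiplicative: β∘α preserves both [−,−]_β and [−,−,−]_β. -/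
/-- Twisting a multiplicative Hom-Akivis algebra along a self-morphism β
commuting with α yields a multiplicative Hom-Akivis algebra. -/
theorem stmt_7 {K A : Type*} [Field K] [CharZero K] [AddCommGroup A] [Module K A]
    (br : A →ₗ[K] A →ₗ[K] A) (tr : A →ₗ[K] A →ₗ[K] A →ₗ[K] A)
    (α : A →ₗ[K] A) (β : A →ₗ[K] A)
    (hskew : ∀ x y : A, br x y = -br y x)
    (hakivis : ∀ x y z : A,
      br (br x y) (α z) + br (br y z) (α x) + br (br z x) (α y)
        = (tr x y z + tr y z x + tr z x y) - (tr y x z + tr z y x + tr x z y))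
    (hαbr : ∀ x y : A, α (br x y) = br (α x) (α y))
    (hαtr : ∀ x y z : A, α (tr x y z) = tr (α x) (α y) (α z))
    (hβbr : ∀ x y : A, β (br x y) = br (β x) (β y))
    (hβtr : ∀ x y z : A, β (tr x y z) = tr (β x) (β y) (β z))
    (hcomm : ∀ x : A, β (α x) = α (β x)) :
    ∀ x y z : A,
      let γ : A → A := fun a => β (α a)
      let brβ : A → A → A := fun a b => β (br a b)
      let trβ : A → A → A → A := fun a b c => β (β (tr a b c))
      γ (brβ x y) = brβ (γ x) (γ y) ∧
      γ (trβ x y z) = trβ (γ x) (γ y) (γ z) := by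
  intro x y z γ brβ trβ
  constructor <;> simp only [γ, brβ, trβ, hβbr, hβtr, hαbr, hαtr, hcomm]
end

section
/- Let (A, [−,−], [−,−,−]) be an Akivis algebra and β an endomorphism of it. Then (A, [−,−]_β, [−,−,−]_β, β), with [x,y]_β := β([x,y]) and [x,y,z]_β := β²([x,y,z]), is a multiplicative Hom-Akivis algebra. -/
/-- Twisting an Akivis algebra along an endomorphism β yields a multiplicative
Hom-Akivis algebra with twist β. -/
theorem stmt_8 {K A : Type*} [Field K] [CharZero K] [AddCommGroup A] [Module K A]
    (br : A →ₗ[K] A →ₗ[K] A) (tr : A →ₗ[K] A →ₗ[K] A →ₗ[K] A)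
    (β : A →ₗ[K] A)
    (hskew : ∀ x y : A, br x y = -br y x)
    (hakivis : ∀ x y z : A,
      br (br x y) z + br (br y z) x + br (br z x) y
        = (tr x y z + tr y z x + tr z x y) - (tr y x z + tr z y x + tr x z y))
    (hβbr : ∀ x y : A, β (br x y) = br (β x) (β y))
    (hβtr : ∀ x y z : A, β (tr x y z) = tr (β x) (β y) (β z)) :
    (∀ x y : A, β (br x y) = -β (br y x)) ∧
    (∀ x y z : A,
      let brβ : A → A → A := fun a b => β (br a b)
      let trβ : A → A → A → A := fun a b c => β (β (tr a b c))
      (brβ (brβ x y) (β z) + brβ (brβ y z) (β x) + brβ (brβ z x) (β y)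
        = (trβ x y z + trβ y z x + trβ z x y)
          - (trβ y x z + trβ z y x + trβ x z y)) ∧
      β (brβ x y) = brβ (β x) (β y) ∧
      β (trβ x y z) = trβ (β x) (β y) (β z)) := by
  refine ⟨fun x y => by rw [hskew x y, map_neg], fun x y z => ?_⟩
  refine ⟨?_, by simp [hβbr], by simp [hβtr]⟩
  have key : ∀ a b : A, β (br (β (br a b)) (β z)) = β (β (br (br a b) z)) := by
    intro a b; rw [← hβbr, hβbr (br a b) z]
  simp only
  rw [show β (br (β (br x y)) (β z)) = β (β (br (br x y) z)) from key x y]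
  rw [show β (br (β (br y z)) (β x)) = β (β (br (br y z) x)) by rw [← hβbr, hβbr]]
  rw [show β (br (β (br z x)) (β y)) = β (β (br (br z x) y)) by rw [← hβbr, hβbr]]
  have := congrArg (β ∘ β) (hakivis x y z)
  simpa [map_add, map_sub] using this
end

section
/- Let (A, [−,−], [−,−,−], α) be a Hom-flexible Hom-Akivis algebra (i.e. [x,y,x] = 0 for all x,y). Then (A, [−,−], α) is a Hom-Lie algebra if and only if Σ_cyc [x,y,z] = 0 for all x,y,z, where Σ_cyc is the cyclic sum over x,y,z. -/
/-- A Hom-flexible Hom-Akivis algebra is a Hom-Lie algebra iff the cyclic sum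
of the ternary bracket vanishes. -/
theorem stmt_12 {K A : Type*} [Field K] [CharZero K] [AddCommGroup A] [Module K A]
    (br : A →ₗ[K] A →ₗ[K] A) (tr : A →ₗ[K] A →ₗ[K] A →ₗ[K] A)
    (α : A →ₗ[K] A)
    (hskew : ∀ x y : A, br x y = -br y x)
    (hakivis : ∀ x y z : A,
      br (br x y) (α z) + br (br y z) (α x) + br (br z x) (α y)
        = (tr x y z + tr y z x + tr z x y) - (tr y x z + tr z y x + tr x z y))
    (hflex : ∀ x y : A, tr x y x = 0) :
    (∀ x y z : A, br (br x y) (α z) + br (br y z) (α x) + br (br z x) (α y) = 0)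
      ↔ (∀ x y z : A, tr x y z + tr y z x + tr z x y = 0) := by
  have hpol : ∀ x y z : A, tr x y z = - tr z y x := by
    intro x y z
    have h := hflex (x + z) y
    simp only [map_add, LinearMap.add_apply, hflex] at h
    have : tr x y z + tr z y x = 0 := by
      rw [← h]; abel
    exact eq_neg_of_add_eq_zero_left this
  have key : ∀ x y z : A,
      br (br x y) (α z) + br (br y z) (α x) + br (br z x) (α y)
        = (2 : K) • (tr x y z + tr y z x + tr z x y) := by
    intro x y z
    rw [hakivis x y z, hpol y x z, hpol z y x, hpol x z y, two_smul]
    abel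
  constructor
  · intro h x y z
    have h2 := key x y z
    rw [h x y z] at h2
    have := h2.symm
    rwa [smul_eq_zero_iff_right (by norm_num : (2:K) ≠ 0)] at this
  · intro h x y z
    rw [key x y z, h x y z, smul_zero]
end

section
/- Let (A, [−,−], [−,−,−], α) be a Hom-alternative Hom-Akivis algebra (the ternary bracket is alternating). Then Σ_cyc [[x,y], α(z)] = 6·[x,y,z] for all x,y,z, where Σ_cyc denotes the cyclic sum over x,y,z. -/
/-- In a Hom-alternative Hom-Akivis algebra, the cyclic sum of
[[x,y], α(z)] equals 6·[x,y,z]. -/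
theorem stmt_13 {K A : Type*} [Field K] [CharZero K] [AddCommGroup A] [Module K A]
    (br : A →ₗ[K] A →ₗ[K] A) (tr : A →ₗ[K] A →ₗ[K] A →ₗ[K] A)
    (α : A →ₗ[K] A)
    (hskew : ∀ x y : A, br x y = -br y x)
    (hakivis : ∀ x y z : A,
      br (br x y) (α z) + br (br y z) (α x) + br (br z x) (α y)
        = (tr x y z + tr y z x + tr z x y) - (tr y x z + tr z y x + tr x z y))
    (halt : ∀ x y z : A, (x = y ∨ y = z ∨ x = z) → tr x y z = 0) :
    ∀ x y z : A,
      br (br x y) (α z) + br (br y z) (α x) + br (br z x) (α y)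
        = (6 : ℕ) • tr x y z := by
  have swap12 : ∀ x y z : A, tr x y z = -tr y x z := by
    intro x y z
    have h := halt (x + y) (x + y) z (Or.inl rfl)
    simp only [map_add, LinearMap.add_apply] at h
    rw [halt x x z (Or.inl rfl), halt y y z (Or.inl rfl)] at h
    simp only [zero_add, add_zero] at h
    exact eq_neg_of_add_eq_zero_right h
  have swap23 : ∀ x y z : A, tr x y z = -tr x z y := by
    intro x y z
    have h := halt x (y + z) (y + z) (Or.inr (Or.inl rfl))
    simp only [map_add, LinearMap.add_apply] at h
    rw [halt x y y (Or.inr (Or.inl rfl)), halt x z z (Or.inr (Or.inl rfl))] at h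
    simp only [zero_add, add_zero] at h
    exact eq_neg_of_add_eq_zero_right h
  intro x y z
  rw [hakivis x y z]
  have h1 : tr y z x = tr x y z := by rw [swap23 y z x, ← swap12 x y z]
  have h2 : tr z x y = tr x y z := by rw [swap12 z x y, ← swap23 x y z]
  have h3 : tr y x z = -tr x y z := by rw [swap12 x y z, neg_neg]
  have h4 : tr z y x = -tr x y z := by rw [swap12 z y x, h1]
  have h5 : tr x z y = -tr x y z := swap23 x z y
  rw [h1, h2, h3, h4, h5]
  module
end

section
/- Let (A, ·, α) be a multiplicative Hom-alternative algebra, i.e. the Hom-associator as(x,y,z) = (x·y)·α(z) − α(x)·(y·z) is alternating and α is an algebra endomorphism. Then the Hom-associator satisfies as(α(x), α(y), [x,z]) = [as(x,y,z), α²(x)] for all x,y,z, where [u,v] := u·v − v·u. -/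
set_option maxHeartbeats 4000000


/-- In a multiplicative Hom-alternative algebra, the Hom-associator satisfies
as(α(x), α(y), [x,z]) = [as(x,y,z), α²(x)]. -/
theorem stmt_14 {K A : Type*} [Field K] [CharZero K] [AddCommGroup A] [Module K A]
    (μ : A →ₗ[K] A →ₗ[K] A) (α : A →ₗ[K] A)
    (hmult : ∀ x y : A, α (μ x y) = μ (α x) (α y))
    (halt : ∀ x y z : A, (x = y ∨ y = z ∨ x = z) →
      μ (μ x y) (α z) - μ (α x) (μ y z) = 0) :
    ∀ x y z : A,
      let as : A → A → A → A := fun a b c => μ (μ a b) (α c) - μ (α a) (μ b c)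
      let br : A → A → A := fun a b => μ a b - μ b a
      as (α x) (α y) (br x z) = br (as x y z) (α (α x)) := by
  have s12 : ∀ a b c : A,
      (μ (μ a b) (α c) - μ (α a) (μ b c)) + (μ (μ b a) (α c) - μ (α b) (μ a c)) = 0 := by
    intro a b c
    have h1 := halt (a + b) (a + b) c (Or.inl rfl)
    have h2 := halt a a c (Or.inl rfl)
    have h3 := halt b b c (Or.inl rfl)
    simp only [map_add, map_sub, LinearMap.add_apply, LinearMap.sub_apply] at h1 h2 h3
    linear_combination (norm := module) h1 - h2 - h3
  have s23 : ∀ a b c : A,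
      (μ (μ a b) (α c) - μ (α a) (μ b c)) + (μ (μ a c) (α b) - μ (α a) (μ c b)) = 0 := by
    intro a b c
    have h1 := halt a (b + c) (b + c) (Or.inr (Or.inl rfl))
    have h2 := halt a b b (Or.inr (Or.inl rfl))
    have h3 := halt a c c (Or.inr (Or.inl rfl))
    simp only [map_add, map_sub, LinearMap.add_apply, LinearMap.sub_apply] at h1 h2 h3
    linear_combination (norm := module) h1 - h2 - h3
  intro x y z as br
  show μ (μ (α x) (α y)) (α (μ x z - μ z x)) - μ (α (α x)) (μ (α y) (μ x z - μ z x))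
      = μ (μ (μ x y) (α z) - μ (α x) (μ y z)) (α (α x)) - μ (α (α x)) (μ (μ x y) (α z) - μ (α x) (μ y z))
  simp only [map_add, map_sub, LinearMap.add_apply, LinearMap.sub_apply, hmult]
  have h1 := s23 (α (z)) (α (x)) (μ (x) (y))
  simp only [map_add, map_sub, map_zero, LinearMap.add_apply, LinearMap.sub_apply, LinearMap.zero_apply, hmult] at h1
  have h2 := s12 (α (z)) (μ (x) (y)) (α (x))
  simp only [map_add, map_sub, map_zero, LinearMap.add_apply, LinearMap.sub_apply, LinearMap.zero_apply, hmult] at h2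
  have h3 := s12 (α (z)) (μ (y) (x)) (α (x))
  simp only [map_add, map_sub, map_zero, LinearMap.add_apply, LinearMap.sub_apply, LinearMap.zero_apply, hmult] at h3
  have h4 := s12 (α (x)) (α (x)) (μ (y) (z))
  simp only [map_add, map_sub, map_zero, LinearMap.add_apply, LinearMap.sub_apply, LinearMap.zero_apply, hmult] at h4
  have h5 := s23 (α (x)) (α (x)) (μ (y) (z))
  simp only [map_add, map_sub, map_zero, LinearMap.add_apply, LinearMap.sub_apply, LinearMap.zero_apply, hmult] at h5
  have h6 := s12 (α (x)) (α (x)) (μ (z) (y))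
  simp only [map_add, map_sub, map_zero, LinearMap.add_apply, LinearMap.sub_apply, LinearMap.zero_apply, hmult] at h6
  have h7 := s23 (α (x)) (α (x)) (μ (z) (y))
  simp only [map_add, map_sub, map_zero, LinearMap.add_apply, LinearMap.sub_apply, LinearMap.zero_apply, hmult] at h7
  have h8 := s12 (α (y)) (μ (x) (x)) (α (z))
  simp only [map_add, map_sub, map_zero, LinearMap.add_apply, LinearMap.sub_apply, LinearMap.zero_apply, hmult] at h8
  have h9 := s23 (α (y)) (μ (x) (x)) (α (z))
  simp only [map_add, map_sub, map_zero, LinearMap.add_apply, LinearMap.sub_apply, LinearMap.zero_apply, hmult] at h9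
  have h10 := s12 (μ (x) (y)) (α (x)) (α (z))
  simp only [map_add, map_sub, map_zero, LinearMap.add_apply, LinearMap.sub_apply, LinearMap.zero_apply, hmult] at h10
  have h11 := s12 (μ (y) (x)) (α (x)) (α (z))
  simp only [map_add, map_sub, map_zero, LinearMap.add_apply, LinearMap.sub_apply, LinearMap.zero_apply, hmult] at h11
  have h12 := s23 (μ (y) (x)) (α (x)) (α (z))
  simp only [map_add, map_sub, map_zero, LinearMap.add_apply, LinearMap.sub_apply, LinearMap.zero_apply, hmult] at h12
  have h13 := s12 (α (y)) (α (x)) (μ (z) (x))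
  simp only [map_add, map_sub, map_zero, LinearMap.add_apply, LinearMap.sub_apply, LinearMap.zero_apply, hmult] at h13
  have h14 := s23 (α (y)) (α (x)) (μ (z) (x))
  simp only [map_add, map_sub, map_zero, LinearMap.add_apply, LinearMap.sub_apply, LinearMap.zero_apply, hmult] at h14
  have h15 := s12 (μ (z) (x)) (α (y)) (α (x))
  simp only [map_add, map_sub, map_zero, LinearMap.add_apply, LinearMap.sub_apply, LinearMap.zero_apply, hmult] at h15
  have h16 := s23 (μ (z) (x)) (α (y)) (α (x))
  simp only [map_add, map_sub, map_zero, LinearMap.add_apply, LinearMap.sub_apply, LinearMap.zero_apply, hmult] at h16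
  have h17 := s12 (μ (y) (z)) (α (x)) (α (x))
  simp only [map_add, map_sub, map_zero, LinearMap.add_apply, LinearMap.sub_apply, LinearMap.zero_apply, hmult] at h17
  have h18 := s12 (μ (z) (y)) (α (x)) (α (x))
  simp only [map_add, map_sub, map_zero, LinearMap.add_apply, LinearMap.sub_apply, LinearMap.zero_apply, hmult] at h18
  have h19 := s23 (α (z)) (μ (x) (x)) (α (y))
  simp only [map_add, map_sub, map_zero, LinearMap.add_apply, LinearMap.sub_apply, LinearMap.zero_apply, hmult] at h19
  have h20 := congrArg (μ (α (α (y)))) (s23 (z) (x) (x))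
  simp only [map_add, map_sub, map_zero, LinearMap.add_apply, LinearMap.sub_apply, LinearMap.zero_apply, hmult] at h20
  have h21 := congrArg (fun u => μ u (α (α (y)))) (s23 (z) (x) (x))
  simp only [map_add, map_sub, map_zero, LinearMap.add_apply, LinearMap.sub_apply, LinearMap.zero_apply, hmult] at h21
  have h22 := congrArg (μ (α (α (z)))) (s12 (y) (x) (x))
  simp only [map_add, map_sub, map_zero, LinearMap.add_apply, LinearMap.sub_apply, LinearMap.zero_apply, hmult] at h22
  have h23 := congrArg (fun u => μ u (α (α (z)))) (s12 (y) (x) (x))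
  simp only [map_add, map_sub, map_zero, LinearMap.add_apply, LinearMap.sub_apply, LinearMap.zero_apply, hmult] at h23
  have h24 := congrArg (fun u => μ u (α (α (z)))) (s23 (y) (x) (x))
  simp only [map_add, map_sub, map_zero, LinearMap.add_apply, LinearMap.sub_apply, LinearMap.zero_apply, hmult] at h24
  have h25 := congrArg (fun u => μ u (α (α (x)))) (s12 (y) (z) (x))
  simp only [map_add, map_sub, map_zero, LinearMap.add_apply, LinearMap.sub_apply, LinearMap.zero_apply, hmult] at h25
  have h26 := congrArg (μ (α (α (x)))) (s23 (y) (z) (x))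
  simp only [map_add, map_sub, map_zero, LinearMap.add_apply, LinearMap.sub_apply, LinearMap.zero_apply, hmult] at h26
  have h27 := congrArg (μ (α (α (z)))) (s23 (x) (y) (x))
  simp only [map_add, map_sub, map_zero, LinearMap.add_apply, LinearMap.sub_apply, LinearMap.zero_apply, hmult] at h27
  have h28 := congrArg (fun u => μ u (α (α (z)))) (s23 (x) (y) (x))
  simp only [map_add, map_sub, map_zero, LinearMap.add_apply, LinearMap.sub_apply, LinearMap.zero_apply, hmult] at h28
  linear_combination (norm := module) (1 : K) • h1 + (-1 : K) • h2 + (1 : K) • h3 + ((-1 : K)/2) • h4 + (2 : K) • h5 + ((-1 : K)/2) • h6 + (1 : K) • h7 + (1 : K) • h8 + (-1 : K) • h9 + (-1 : K) • h10 + (1 : K) • h11 + (-1 : K) • h12 + (-2 : K) • h13 + (2 : K) • h14 + (-1 : K) • h15 + (1 : K) • h16 + (-1 : K) • h17 + (-1 : K) • h18 + (-1 : K) • h19 + ((1 : K)/2) • h20 + ((-1 : K)/2) • h21 + (1 : K) • h22 + (2 : K) • h23 + (-1 : K) • h24 + (1 : K) • h25 + (1 : K) • h26 + (-1 : K) • h27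 + (-1 : K) • h28
end

section
/- Let (A, ·, α) be a multiplicative Hom-alternative algebra. Then the commutator algebra (A, [−,−], α), with [x,y] := x·y − y·x, is a Hom-Malcev algebra: [−,−] is skew-symmetric and satisfies the Hom-Malcev identity Σ_{(α(x), α(y), z_x)} [[α(x), α(y)], α(z_x)] = [Σ_cyc [[x,y], α(z)], α²(x)], where z_x := [x,z], the left-hand cyclic sum is over the triple (α(x), α(y), z_x), and Σ_cyc on the right is the cyclic sum over x,y,z. -/
set_option maxHeartbeats 8000000 in
/-- The commutator algebra of a multiplicative Hom-alternative algebra is a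
Hom-Malcev algebra. -/
theorem stmt_15 {K A : Type*} [Field K] [CharZero K] [AddCommGroup A] [Module K A]
    (μ : A →ₗ[K] A →ₗ[K] A) (α : A →ₗ[K] A)
    (hmult : ∀ x y : A, α (μ x y) = μ (α x) (α y))
    (halt : ∀ x y z : A, (x = y ∨ y = z ∨ x = z) →
      μ (μ x y) (α z) - μ (α x) (μ y z) = 0) :
    (∀ x y : A, μ x y - μ y x = -(μ y x - μ x y)) ∧
    (∀ x y z : A,
      let br : A → A → A := fun a b => μ a b - μ b a
      br (br (α x) (α y)) (α (br x z))
        + br (br (α y) (br x z)) (α (α x))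
        + br (br (br x z) (α x)) (α (α y))
        = br (br (br x y) (α z) + br (br y z) (α x) + br (br z x) (α y))
            (α (α x))) := by
  have hP1 : ∀ a b c : A, μ (μ a b) (α c) - μ (α a) (μ b c)
      + (μ (μ b a) (α c) - μ (α b) (μ a c)) = 0 := by
    intro a b c
    have h := halt (a + b) (a + b) c (Or.inl rfl)
    have ha := halt a a c (Or.inl rfl)
    have hb := halt b b c (Or.inl rfl)
    simp only [map_add, LinearMap.add_apply] at h
    linear_combination (norm := module) h - ha - hb
  have hP2 : ∀ a b c : A, μ (μ a b) (α c) - μ (α a) (μ b c)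
      + (μ (μ a c) (α b) - μ (α a) (μ c b)) = 0 := by
    intro a b c
    have h := halt a (b + c) (b + c) (Or.inr (Or.inl rfl))
    have hb := halt a b b (Or.inr (Or.inl rfl))
    have hc := halt a c c (Or.inr (Or.inl rfl))
    simp only [map_add, LinearMap.add_apply] at h
    linear_combination (norm := module) h - hb - hc
  have hP3 : ∀ a b c : A, μ (μ a b) (α c) - μ (α a) (μ b c)
      + (μ (μ c b) (α a) - μ (α c) (μ b a)) = 0 := by
    intro a b c
    have h := halt (a + c) b (a + c) (Or.inr (Or.inr rfl))
    have ha := halt a b a (Or.inr (Or.inr rfl))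
    have hc := halt c b c (Or.inr (Or.inr rfl))
    simp only [map_add, LinearMap.add_apply] at h
    linear_combination (norm := module) h - ha - hc
  have hLP1 : ∀ t a b c : A, μ t (μ (μ a b) (α c)) - μ t (μ (α a) (μ b c))
      + (μ t (μ (μ b a) (α c)) - μ t (μ (α b) (μ a c))) = 0 := by
    intro t a b c
    have h := congrArg (μ t) (hP1 a b c)
    simp only [map_add, map_sub, map_zero] at h
    linear_combination (norm := module) h
  have hLP2 : ∀ t a b c : A, μ t (μ (μ a b) (α c)) - μ t (μ (α a) (μ b c))
      + (μ t (μ (μ a c) (α b)) - μ t (μ (α a) (μ c b))) = 0 := by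
    intro t a b c
    have h := congrArg (μ t) (hP2 a b c)
    simp only [map_add, map_sub, map_zero] at h
    linear_combination (norm := module) h
  have hLP3 : ∀ t a b c : A, μ t (μ (μ a b) (α c)) - μ t (μ (α a) (μ b c))
      + (μ t (μ (μ c b) (α a)) - μ t (μ (α c) (μ b a))) = 0 := by
    intro t a b c
    have h := congrArg (μ t) (hP3 a b c)
    simp only [map_add, map_sub, map_zero] at h
    linear_combination (norm := module) h
  have hRP1 : ∀ t a b c : A, μ (μ (μ a b) (α c)) t - μ (μ (α a) (μ b c)) t
      + (μ (μ (μ b a) (α c)) t - μ (μ (α b) (μ a c)) t) = 0 := by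
    intro t a b c
    have h := congrArg (fun s => μ s t) (hP1 a b c)
    simp only [map_add, map_sub, map_zero, LinearMap.add_apply, LinearMap.sub_apply,
      LinearMap.zero_apply] at h
    linear_combination (norm := module) h
  have hRP2 : ∀ t a b c : A, μ (μ (μ a b) (α c)) t - μ (μ (α a) (μ b c)) t
      + (μ (μ (μ a c) (α b)) t - μ (μ (α a) (μ c b)) t) = 0 := by
    intro t a b c
    have h := congrArg (fun s => μ s t) (hP2 a b c)
    simp only [map_add, map_sub, map_zero, LinearMap.add_apply, LinearMap.sub_apply,
      LinearMap.zero_apply] at h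
    linear_combination (norm := module) h
  have hRP3 : ∀ t a b c : A, μ (μ (μ a b) (α c)) t - μ (μ (α a) (μ b c)) t
      + (μ (μ (μ c b) (α a)) t - μ (μ (α c) (μ b a)) t) = 0 := by
    intro t a b c
    have h := congrArg (fun s => μ s t) (hP3 a b c)
    simp only [map_add, map_sub, map_zero, LinearMap.add_apply, LinearMap.sub_apply,
      LinearMap.zero_apply] at h
    linear_combination (norm := module) h
  refine ⟨fun x y => (neg_sub _ _).symm, fun x y z => ?_⟩
  dsimp only
  simp only [map_sub, map_add, LinearMap.sub_apply, LinearMap.add_apply, hmult]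
  have e0 := hP1 (α x) (α x) (μ y z)
  have e1 := hP2 (α x) (α x) (μ y z)
  have e2 := hP3 (α x) (α x) (μ y z)
  have e3 := hP1 (α x) (α x) (μ z y)
  have e4 := hP2 (α x) (α x) (μ z y)
  have e5 := hP3 (α x) (α x) (μ z y)
  have e6 := hP1 (α x) (α y) (μ x z)
  have e7 := hP2 (α x) (α y) (μ x z)
  have e8 := hP3 (α x) (α y) (μ x z)
  have e9 := hP1 (α x) (α y) (μ z x)
  have e10 := hP2 (α x) (α y) (μ z x)
  have e11 := hP1 (α x) (α z) (μ x y)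
  have e12 := hP2 (α x) (α z) (μ x y)
  have e13 := hP3 (α x) (α z) (μ x y)
  have e14 := hP1 (α x) (α z) (μ y x)
  have e15 := hP2 (α x) (α z) (μ y x)
  have e16 := hP3 (α x) (α z) (μ y x)
  have e17 := hP1 (α x) (μ x y) (α z)
  have e18 := hP3 (α x) (μ x y) (α z)
  have e19 := hP1 (α x) (μ x z) (α y)
  have e20 := hP3 (α x) (μ x z) (α y)
  have e21 := hP1 (α x) (μ y x) (α z)
  have e22 := hP3 (α x) (μ y x) (α z)
  have e23 := hP1 (α x) (μ z x) (α y)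
  have e24 := hP1 (α y) (α z) (μ x x)
  have e25 := hP2 (α y) (α z) (μ x x)
  have e26 := hP3 (α y) (α z) (μ x x)
  have e27 := hP1 (α y) (μ x x) (α z)
  have e28 := hP3 (α y) (μ x x) (α z)
  have e29 := hLP1 (α (α z)) x x y
  have e30 := hRP1 (α (α z)) x x y
  have e31 := hLP2 (α (α z)) x x y
  have e32 := hRP2 (α (α z)) x x y
  have e33 := hLP3 (α (α z)) x x y
  have e34 := hRP3 (α (α z)) x x y
  have e35 := hRP1 (α (α y)) x x z
  have e36 := hLP2 (α (α y)) x x z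
  have e37 := hRP2 (α (α y)) x x z
  have e38 := hLP3 (α (α y)) x x z
  have e39 := hRP3 (α (α y)) x x z
  have e40 := hLP1 (α (α x)) x y z
  have e41 := hRP1 (α (α x)) x y z
  have e42 := hRP2 (α (α x)) x y z
  simp only [hmult, map_sub, map_add, LinearMap.sub_apply, LinearMap.add_apply] at e0 e1 e2 e3 e4 e5 e6 e7 e8 e9 e10 e11 e12 e13 e14 e15 e16 e17 e18 e19 e20 e21 e22 e23 e24 e25 e26 e27 e28 e29 e30 e31 e32 e33 e34 e35 e36 e37 e38 e39 e40 e41 e42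
  linear_combination (norm := module) (3 : K) • e0 +
      (-1 : K) • e1 +
      (-1 : K) • e2 +
      ((-3 : K)/2) • e3 +
      (1 : K) • e4 +
      (1 : K) • e5 +
      (3 : K) • e6 +
      (2 : K) • e7 +
      (-2 : K) • e8 +
      (6 : K) • e9 +
      (-6 : K) • e10 +
      (7 : K) • e11 +
      (-7 : K) • e12 +
      (1 : K) • e13 +
      (-1 : K) • e14 +
      (-5 : K) • e15 +
      (5 : K) • e16 +
      (2 : K) • e17 +
      (1 : K) • e18 +
      (2 : K) • e19 +
      (-4 : K) • e20 +
      (4 : K) • e21 +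
      (-1 : K) • e22 +
      (6 : K) • e23 +
      (1 : K) • e24 +
      (-1 : K) • e25 +
      (-1 : K) • e26 +
      (4 : K) • e27 +
      (-7 : K) • e28 +
      ((-7 : K)/2) • e29 +
      (1 : K) • e30 +
      (1 : K) • e31 +
      (-2 : K) • e32 +
      (-1 : K) • e33 +
      (-4 : K) • e34 +
      ((9 : K)/2) • e35 +
      (-5 : K) • e36 +
      (-1 : K) • e37 +
      (1 : K) • e38 +
      (-7 : K) • e39 +
      (-3 : K) • e40 +
      (-4 : K) • e41 +
      (2 : K) • e42
end
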